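/- Let σ₊, σ₋ > 0 and define Φ : ℝ → ℝ by Φ(η) = (2√σ₋/(√σ₊+√σ₋))·(F(η/√σ₊) + (√σ₊−√σ₋)/(2√σ₋)) for η > 0 and Φ(η) = (2√σ₊/(√σ₊+√σ₋))·F(η/√σ₋) for η ≤ 0, where F(η) = 1 − (1/2)e^{−η} for η > 0 and F(η) = (1/2)e^{η} for η ≤ 0. Then Φ is continuous at 0 with Φ(0) = √σ₊/(√σ₊+√σ₋), and the one-sided derivatives satisfy the transmission condition σ₊·Φ'(0⁺) = σ₋·Φ'(0⁻). -/

import Mathlib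

open Real Set

noncomputable def Fpw (η : ℝ) : ℝ :=
  if 0 < η then 1 - (1 / 2) * Real.exp (-η) else (1 / 2) * Real.exp η

noncomputable def PhiTP (sp sm : ℝ) (η : ℝ) : ℝ :=
  if 0 < η then
    (2 * Real.sqrt sm / (Real.sqrt sp + Real.sqrt sm)) *
      (Fpw (η / Real.sqrt sp) + (Real.sqrt sp - Real.sqrt sm) / (2 * Real.sqrt sm))
  else
    (2 * Real.sqrt sp / (Real.sqrt sp + Real.sqrt sm)) * Fpw (η / Real.sqrt sm)

theorem stmt_5 (sp sm : ℝ) (hsp : 0 < sp) (hsm : 0 < sm) :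
    ContinuousAt (PhiTP sp sm) 0 ∧
    PhiTP sp sm 0 = Real.sqrt sp / (Real.sqrt sp + Real.sqrt sm) ∧
    ∃ dp dm : ℝ,
      HasDerivWithinAt (PhiTP sp sm) dp (Set.Ici 0) 0 ∧
      HasDerivWithinAt (PhiTP sp sm) dm (Set.Iic 0) 0 ∧
      sp * dp = sm * dm := by
  set s := Real.sqrt sp with hsdef
  set t := Real.sqrt sm with htdef
  have hs : 0 < s := Real.sqrt_pos.mpr hsp
  have ht : 0 < t := Real.sqrt_pos.mpr hsm
  have hst : 0 < s + t := by linarith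
  -- smooth extensions
  set gp : ℝ → ℝ := fun η =>
    (2 * t / (s + t)) * ((1 - (1 / 2) * Real.exp (-(η / s))) + (s - t) / (2 * t)) with hgp
  set gm : ℝ → ℝ := fun η => (2 * s / (s + t)) * ((1 / 2) * Real.exp (η / t)) with hgm
  have hval : PhiTP sp sm 0 = s / (s + t) := by
    simp only [PhiTP, Fpw]
    norm_num
    field_simp
    simp only [hsdef, htdef]
    ring
  have heqp : Set.EqOn (PhiTP sp sm) gp (Set.Ici 0) := by
    intro x hx
    rcases eq_or_lt_of_le (Set.mem_Ici.mp hx) with h | h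
    · rw [← h]
      simp only [hgp]
      rw [hval]
      norm_num
      field_simp
      ring
    · simp only [PhiTP, Fpw, if_pos h, if_pos (div_pos h hs), hgp, ← hsdef, ← htdef]
  have heqm : Set.EqOn (PhiTP sp sm) gm (Set.Iic 0) := by
    intro x hx
    have hx' : ¬ (0 < x) := not_lt.mpr hx
    have hx'' : ¬ (0 < x / t) := not_lt.mpr (div_nonpos_of_nonpos_of_nonneg hx ht.le)
    simp only [PhiTP, Fpw, if_neg hx', if_neg hx'', hgm, ← hsdef, ← htdef]
  -- derivatives of the smooth extensions
  have hdp : HasDerivAt gp (t / (s * (s + t))) 0 := by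
    have h1 : HasDerivAt (fun η : ℝ => -(η / s)) (-(1 / s)) 0 := by
      simpa using ((hasDerivAt_id (0:ℝ)).div_const s).fun_neg
    have h2 := h1.exp
    have h3 : HasDerivAt (fun η : ℝ => Real.exp (-(η / s))) (-(1 / s)) 0 := by
      simpa using h2
    have h4 := (((hasDerivAt_const (0:ℝ) (1:ℝ)).sub (h3.const_mul (1/2))).add_const
      ((s - t) / (2 * t))).const_mul (2 * t / (s + t))
    refine h4.congr_deriv ?_
    field_simp
    ring
  have hdm : HasDerivAt gm (s / (t * (s + t))) 0 := by
    have h1 : HasDerivAt (fun η : ℝ => η / t) (1 / t) 0 := by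
      simpa using (hasDerivAt_id (0:ℝ)).div_const t
    have h3 : HasDerivAt (fun η : ℝ => Real.exp (η / t)) (1 / t) 0 := by simpa using h1.exp
    have h4 := (h3.const_mul (1/2)).const_mul (2 * s / (s + t))
    refine h4.congr_deriv ?_
    field_simp
  have hDp : HasDerivWithinAt (PhiTP sp sm) (t / (s * (s + t))) (Set.Ici 0) 0 :=
    (hdp.hasDerivWithinAt).congr heqp (heqp (Set.self_mem_Ici))
  have hDm : HasDerivWithinAt (PhiTP sp sm) (s / (t * (s + t))) (Set.Iic 0) 0 :=
    (hdm.hasDerivWithinAt).congr heqm (heqm (Set.self_mem_Iic))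
  have hcont : ContinuousAt (PhiTP sp sm) 0 := by
    have := (hDm.continuousWithinAt).union (hDp.continuousWithinAt)
    rwa [Set.Iic_union_Ici, continuousWithinAt_univ] at this
  refine ⟨hcont, hval, t / (s * (s + t)), s / (t * (s + t)), hDp, hDm, ?_⟩
  have hss : s * s = sp := Real.mul_self_sqrt hsp.le
  have htt : t * t = sm := Real.mul_self_sqrt hsm.le
  rw [← hss, ← htt]
  field_simp
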